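/- With the setup below, there exists C > 0 such that |u(r)⁴ r² − (1−2ε)² ρ(r)²| ≤ C r^{2−3ε} for all r ∈ (0, 1]; since ρ(r) is comparable to r^{1−2ε} near 0, this says u(r)⁴ r² = (1−2ε)² ρ(r)² (1 + O(ρ(r)^{δ})) as r → 0⁺ with δ = ε/(1−2ε) > 0. -/

import Mathlib

open MeasureTheory

lemma cubic_bound (c₀ c₁ c₂ c₃ s : ℝ) (hs : 1 ≤ s) :
    |c₀ + c₁ * s + c₂ * s ^ 2 + c₃ * s ^ 3| ≤ (|c₀| + |c₁| + |c₂| + |c₃|) * s ^ 3 := by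
  have h0 : 0 < s := lt_of_lt_of_le one_pos hs
  have h3 : 1 ≤ s ^ 3 := one_le_pow₀ hs
  have hs3 : s ≤ s ^ 3 := by nlinarith [sq_nonneg (s - 1), sq_nonneg s]
  have hs23 : s ^ 2 ≤ s ^ 3 := by nlinarith [sq_nonneg (s - 1), sq_nonneg s]
  have t1 : |c₀ + c₁ * s + c₂ * s ^ 2 + c₃ * s ^ 3| ≤
      |c₀| + |c₁| * s + |c₂| * s ^ 2 + |c₃| * s ^ 3 := by
    calc |c₀ + c₁ * s + c₂ * s ^ 2 + c₃ * s ^ 3|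
        ≤ |c₀ + c₁ * s + c₂ * s ^ 2| + |c₃ * s ^ 3| := abs_add_le _ _
      _ ≤ (|c₀ + c₁ * s| + |c₂ * s ^ 2|) + |c₃ * s ^ 3| :=
          add_le_add_left (abs_add_le _ _) _
      _ ≤ ((|c₀| + |c₁ * s|) + |c₂ * s ^ 2|) + |c₃ * s ^ 3| :=
          add_le_add_left (add_le_add_left (abs_add_le _ _) _) _
      _ = |c₀| + |c₁| * s + |c₂| * s ^ 2 + |c₃| * s ^ 3 := by
          rw [abs_mul, abs_mul, abs_mul, abs_of_pos h0, abs_of_pos (by positivity : (0:ℝ) < s ^ 2),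
            abs_of_pos (by positivity : (0:ℝ) < s ^ 3)]
  have t2 : |c₀| + |c₁| * s + |c₂| * s ^ 2 + |c₃| * s ^ 3 ≤
      (|c₀| + |c₁| + |c₂| + |c₃|) * s ^ 3 := by
    have a0 : |c₀| ≤ |c₀| * s ^ 3 := le_mul_of_one_le_right (abs_nonneg _) h3
    have a1 : |c₁| * s ≤ |c₁| * s ^ 3 := mul_le_mul_of_nonneg_left hs3 (abs_nonneg _)
    have a2 : |c₂| * s ^ 2 ≤ |c₂| * s ^ 3 := mul_le_mul_of_nonneg_left hs23 (abs_nonneg _)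
    nlinarith [abs_nonneg c₃]
  linarith

set_option maxHeartbeats 1000000 in
/-- with `ε ∈ (0,1/2)`, `β₀ > 0`, `u(t) = β₀ + t^{-ε}` and
`ρ(r) = ∫₀^r u(t)² dt`, there exists `C > 0` such that
`|u(r)⁴ r² − (1−2ε)² ρ(r)²| ≤ C r^{2−3ε}` for all `r ∈ (0,1]`. -/
theorem stmt_5 (ε β₀ : ℝ) (hε : ε ∈ Set.Ioo (0 : ℝ) (1 / 2)) (hβ₀ : 0 < β₀)
    (u ρ : ℝ → ℝ)
    (hu : ∀ t : ℝ, 0 < t → u t = β₀ + t ^ (-ε))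
    (hρ : ∀ r : ℝ, 0 ≤ r → ρ r = ∫ t in Set.Ioo (0 : ℝ) r, (u t) ^ 2) :
    ∃ C > (0 : ℝ), ∀ r : ℝ, 0 < r → r ≤ 1 →
      |(u r) ^ 4 * r ^ 2 - (1 - 2 * ε) ^ 2 * (ρ r) ^ 2| ≤ C * r ^ (2 - 3 * ε) := by
  obtain ⟨hε0, hε2⟩ := hε
  have hK : (0:ℝ) < 1 - 2 * ε := by linarith
  have h1ε : (0:ℝ) < 1 - ε := by linarith
  -- explicit formula for ρ
  have hρform : ∀ r : ℝ, 0 < r →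
      ρ r = β₀ ^ 2 * r + (2 * β₀ / (1 - ε)) * r ^ (1 - ε)
        + (1 / (1 - 2 * ε)) * r ^ (1 - 2 * ε) := by
    intro r hr
    rw [hρ r hr.le]
    have h1 : ∫ t in Set.Ioo (0 : ℝ) r, (u t) ^ 2
        = ∫ t in Set.Ioo (0 : ℝ) r, (β₀ + t ^ (-ε)) ^ 2 := by
      apply setIntegral_congr_fun measurableSet_Ioo
      intro t ht
      dsimp only
      rw [hu t ht.1]
    rw [h1]
    rw [← integral_Ioc_eq_integral_Ioo, ← intervalIntegral.integral_of_le hr.le]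
    have h2 : ∫ t in (0:ℝ)..r, (β₀ + t ^ (-ε)) ^ 2
        = ∫ t in (0:ℝ)..r, (β₀ ^ 2 + 2 * β₀ * t ^ (-ε) + t ^ (-(2 * ε))) := by
      apply intervalIntegral.integral_congr
      intro t ht
      rw [Set.uIcc_of_le hr.le] at ht
      dsimp only
      rcases eq_or_lt_of_le ht.1 with h | h
      · subst h
        rw [Real.zero_rpow (by linarith : -ε ≠ 0),
          Real.zero_rpow (by intro h; nlinarith [h] : -(2*ε) ≠ 0)]
        ring
      · have ht0 : (0:ℝ) < t := h
        have hpow : t ^ (-ε) * t ^ (-ε) = t ^ (-(2 * ε)) := by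
          rw [← Real.rpow_add ht0]; ring_nf
        rw [← hpow]; ring
    rw [h2]
    have i1 : IntervalIntegrable (fun t : ℝ => t ^ (-ε)) volume 0 r :=
      intervalIntegral.intervalIntegrable_rpow' (by linarith)
    have i2 : IntervalIntegrable (fun t : ℝ => t ^ (-(2 * ε))) volume 0 r :=
      intervalIntegral.intervalIntegrable_rpow' (by linarith)
    have i0 : IntervalIntegrable (fun _ : ℝ => β₀ ^ 2) volume 0 r :=
      intervalIntegrable_const
    have i01 : IntervalIntegrable (fun t : ℝ => β₀ ^ 2 + 2 * β₀ * t ^ (-ε)) volume 0 r :=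
      i0.add (i1.const_mul _)
    rw [show (fun t : ℝ => β₀ ^ 2 + 2 * β₀ * t ^ (-ε) + t ^ (-(2 * ε)))
        = fun t : ℝ => (β₀ ^ 2 + 2 * β₀ * t ^ (-ε)) + t ^ (-(2 * ε)) from rfl]
    rw [intervalIntegral.integral_add i01 i2,
      intervalIntegral.integral_add i0 (i1.const_mul _),
      intervalIntegral.integral_const_mul,
      integral_rpow (Or.inl (by linarith : (-1:ℝ) < -ε)),
      integral_rpow (Or.inl (by linarith : (-1:ℝ) < -(2*ε))),
      intervalIntegral.integral_const]
    have e1 : -ε + 1 = 1 - ε := by ring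
    have e2 : -(2 * ε) + 1 = 1 - 2 * ε := by ring
    rw [e1, e2, Real.zero_rpow (by linarith : (1:ℝ) - ε ≠ 0),
      Real.zero_rpow (by linarith : (1:ℝ) - 2 * ε ≠ 0)]
    simp only [smul_eq_mul, sub_zero]
    field_simp [h1ε.ne', hK.ne']
  -- coefficients
  set K : ℝ := 1 - 2 * ε with hKdef
  set B : ℝ := 2 * β₀ / (1 - ε) with hBdef
  set D : ℝ := 1 / K with hDdef
  set c₃ : ℝ := 4 * β₀ - 2 * B * K with hc3
  set c₂ : ℝ := 6 * β₀ ^ 2 - K ^ 2 * (B ^ 2 + 2 * β₀ ^ 2 * D) with hc2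
  set c₁ : ℝ := 4 * β₀ ^ 3 - 2 * K ^ 2 * β₀ ^ 2 * B with hc1
  set c₀ : ℝ := β₀ ^ 4 - K ^ 2 * β₀ ^ 4 with hc0
  refine ⟨|c₀| + |c₁| + |c₂| + |c₃| + 1, by positivity, ?_⟩
  intro r hr hr1
  set s : ℝ := r ^ (-ε) with hsdef
  have hs0 : 0 < s := Real.rpow_pos_of_pos hr _
  have hs1 : 1 ≤ s := Real.one_le_rpow_of_pos_of_le_one_of_nonpos hr hr1 (by linarith)
  -- rpow rewrites
  have e1 : r ^ (1 - ε) = r * s := by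
    rw [show (1 - ε) = 1 + (-ε) by ring, Real.rpow_add hr, Real.rpow_one]
  have e2 : r ^ (1 - 2 * ε) = r * s ^ 2 := by
    rw [show (1 - 2 * ε) = 1 + (-ε) + (-ε) by ring, Real.rpow_add hr, Real.rpow_add hr,
      Real.rpow_one]
    ring
  have e3 : r ^ (2 - 3 * ε) = r ^ 2 * s ^ 3 := by
    rw [show (2 - 3 * ε) = 1 + 1 + (-ε) + (-ε) + (-ε) by ring, Real.rpow_add hr,
      Real.rpow_add hr, Real.rpow_add hr, Real.rpow_add hr, Real.rpow_one]
    ring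
  rw [hu r hr, hρform r hr, e1, e2, e3]
  have key : (β₀ + s) ^ 4 * r ^ 2 -
      (1 - 2 * ε) ^ 2 * (β₀ ^ 2 * r + (2 * β₀ / (1 - ε)) * (r * s) + 1 / (1 - 2 * ε) * (r * s ^ 2)) ^ 2
      = r ^ 2 * (c₀ + c₁ * s + c₂ * s ^ 2 + c₃ * s ^ 3) := by
    rw [hc0, hc1, hc2, hc3, hBdef, hDdef, hKdef]
    field_simp [h1ε.ne', hK.ne', (by linarith : (1:ℝ) - 2 * ε ≠ 0)]
    ring
  rw [key, abs_mul, abs_of_pos (by positivity : (0:ℝ) < r ^ 2)]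
  have hb := cubic_bound c₀ c₁ c₂ c₃ s hs1
  calc r ^ 2 * |c₀ + c₁ * s + c₂ * s ^ 2 + c₃ * s ^ 3|
      ≤ r ^ 2 * ((|c₀| + |c₁| + |c₂| + |c₃|) * s ^ 3) := by gcongr
    _ ≤ (|c₀| + |c₁| + |c₂| + |c₃| + 1) * (r ^ 2 * s ^ 3) := by
        nlinarith [abs_nonneg c₀, abs_nonneg c₁, abs_nonneg c₂, abs_nonneg c₃,
          pow_pos hs0 3, pow_pos hr 2]
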